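/- Let n ≥ 1 and let U_1, …, U_{2^{n-1}} be 2×2 complex unitary matrices. Then there exist real numbers α_k, β_k, γ_k, δ_k (k = 1, …, 2^{n-1}) such that the 2^n × 2^n block-diagonal matrix diag(U_1, …, U_{2^{n-1}}) equals the product A_1·A_2·A_3·A_4·A_5·A_6, where A_1 = diag(e^{iα_1}, …, e^{iα_{2^{n-1}}}) ⊗ I_2, A_2 = diag(R_z(β_1), …, R_z(β_{2^{n-1}})), A_3 = I_{2^{n-1}} ⊗ (S·H), A_4 = diag(R_z(γ_1), …, R_z(γ_{2^{n-1}})), A_5 = I_{2^{n-1}} ⊗ (H·S†), and A_6 = diag(R_z(δ_1), …, R_z(δ_{2^{n-1}})). -/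

import Mathlib

open Matrix Complex Kronecker

/-- The single-qubit Z-rotation gate `R_z(θ) = [[e^{-iθ/2}, 0], [0, e^{iθ/2}]]`. -/
noncomputable def Rz (θ : ℝ) : Matrix (Fin 2) (Fin 2) ℂ :=
  !![Complex.exp (-(θ / 2 : ℝ) * Complex.I), 0; 0, Complex.exp ((θ / 2 : ℝ) * Complex.I)]

/-- The Hadamard gate `H = (1/√2)·[[1,1],[1,−1]]`. -/
noncomputable def Hgate : Matrix (Fin 2) (Fin 2) ℂ :=
  ((1 / Real.sqrt 2 : ℝ) : ℂ) • !![1, 1; 1, -1]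

/-- The phase gate `S = [[1,0],[0,i]]`. -/
def Sgate : Matrix (Fin 2) (Fin 2) ℂ := !![1, 0; 0, Complex.I]

/-- `blockDiag2 M` is the block-diagonal matrix `diag(M 0, M 1, …, M (N-1))` with 2×2 blocks,
of size `2N × 2N`, with rows and columns indexed by `Fin N × Fin 2` (block index first). -/
def blockDiag2 {N : ℕ} (M : Fin N → Matrix (Fin 2) (Fin 2) ℂ) :
    Matrix (Fin N × Fin 2) (Fin N × Fin 2) ℂ :=
  Matrix.of fun p q => if p.1 = q.1 then M p.1 p.2 q.2 else 0

/-- Decomposition of a uniformly controlled gate `diag(U_1, …, U_{2^{n-1}})` as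
`A_1 · A_2 · A_3 · A_4 · A_5 · A_6`, where
`A_1 = diag(e^{iα_1}, …, e^{iα_{2^{n-1}}}) ⊗ I_2`, `A_2 = diag(R_z(β_1), …, R_z(β_{2^{n-1}}))`,
`A_3 = I_{2^{n-1}} ⊗ (S·H)`, `A_4 = diag(R_z(γ_1), …, R_z(γ_{2^{n-1}}))`,
`A_5 = I_{2^{n-1}} ⊗ (H·S†)`, and `A_6 = diag(R_z(δ_1), …, R_z(δ_{2^{n-1}}))`. -/
lemma rz_eq (γ : ℝ) : Rz γ =
    !![(Real.cos (γ/2) : ℂ) - (Real.sin (γ/2) : ℂ) * Complex.I, 0;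
       0, (Real.cos (γ/2) : ℂ) + (Real.sin (γ/2) : ℂ) * Complex.I] := by
  have e1 : Complex.exp (-(γ / 2 : ℝ) * Complex.I) =
      (Real.cos (γ/2) : ℂ) - (Real.sin (γ/2) : ℂ) * Complex.I := by
    rw [show (-(γ / 2 : ℝ) * Complex.I) = ((-(γ/2) : ℝ) : ℂ) * Complex.I by push_cast; ring,
      Complex.exp_mul_I]
    push_cast
    rw [Complex.cos_neg, Complex.sin_neg]
    ring
  have e2 : Complex.exp ((γ / 2 : ℝ) * Complex.I) =
      (Real.cos (γ/2) : ℂ) + (Real.sin (γ/2) : ℂ) * Complex.I := by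
    rw [Complex.exp_mul_I]
    push_cast
    ring
  rw [Rz, e1, e2]

lemma hgate_eq : Hgate = !![((Real.sqrt 2)⁻¹ : ℂ), ((Real.sqrt 2)⁻¹ : ℂ);
    ((Real.sqrt 2)⁻¹ : ℂ), -((Real.sqrt 2)⁻¹ : ℂ)] := by
  rw [Hgate]
  ext i j
  fin_cases i <;> fin_cases j <;> simp

lemma sgateH_eq : Sgateᴴ = !![1, 0; 0, -Complex.I] := by
  rw [Sgate]
  ext i j
  fin_cases i <;> fin_cases j <;> simp

lemma ry_eq (γ : ℝ) : (Sgate * Hgate) * Rz γ * (Hgate * Sgateᴴ) =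
    !![(Real.cos (γ/2) : ℂ), -(Real.sin (γ/2) : ℂ); (Real.sin (γ/2) : ℂ), (Real.cos (γ/2) : ℂ)] := by
  have h2 : ((Real.sqrt 2 : ℂ)) * (Real.sqrt 2 : ℂ) = 2 := by
    rw [← Complex.ofReal_mul, Real.mul_self_sqrt (by norm_num)]
    norm_num
  have hs : (Real.sqrt 2 : ℂ) ≠ 0 := by
    intro h; rw [h, mul_zero] at h2; norm_num at h2
  rw [rz_eq, hgate_eq, sgateH_eq, Sgate, Matrix.mul_fin_two, Matrix.mul_fin_two,
    Matrix.mul_fin_two, Matrix.mul_fin_two]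
  ext i j
  fin_cases i <;> fin_cases j <;> simp <;> field_simp <;> rw [show (Real.sqrt 2 : ℂ) ^ 2 = 2 by rw [sq, h2]] <;> ring_nf
  all_goals simp [Complex.I_sq]

lemma exp_entry (s t u z : ℂ) (h : s + t = u) :
    Complex.exp s * z * Complex.exp t = Complex.exp u * z := by
  rw [mul_right_comm, ← Complex.exp_add, h]

set_option maxHeartbeats 1000000 in

lemma euler (β γ δ : ℝ) :
    Rz β * (Sgate * Hgate) * Rz γ * (Hgate * Sgateᴴ) * Rz δ =
    !![Complex.exp (((-(β + δ) / 2 : ℝ) : ℂ) * Complex.I) * (Real.cos (γ/2) : ℂ),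
       -(Complex.exp ((((δ - β) / 2 : ℝ) : ℂ) * Complex.I) * (Real.sin (γ/2) : ℂ));
       Complex.exp ((((β - δ) / 2 : ℝ) : ℂ) * Complex.I) * (Real.sin (γ/2) : ℂ),
       Complex.exp ((((β + δ) / 2 : ℝ) : ℂ) * Complex.I) * (Real.cos (γ/2) : ℂ)] := by
  have h : Rz β * (Sgate * Hgate) * Rz γ * (Hgate * Sgateᴴ) * Rz δ
      = Rz β * ((Sgate * Hgate) * Rz γ * (Hgate * Sgateᴴ)) * Rz δ := by
    simp only [Matrix.mul_assoc]
  rw [h, ry_eq, Rz, Rz, Matrix.mul_fin_two, Matrix.mul_fin_two]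
  ext i j
  fin_cases i <;> fin_cases j <;>
    simp only [Matrix.cons_val', Matrix.cons_val_zero, Matrix.cons_val_one, Matrix.head_cons,
      Matrix.head_fin_const, Matrix.empty_val', Matrix.cons_val_fin_one, Matrix.of_apply,
      zero_mul, mul_zero, add_zero, zero_add, mul_neg, neg_mul, neg_inj]
  all_goals simp only [Fin.mk_zero, Fin.mk_one, Matrix.cons_val_zero, Matrix.cons_val_one,
    Matrix.head_cons, Fin.isValue, neg_zero, zero_add, mul_neg, neg_mul, neg_inj]
  all_goals refine exp_entry _ _ _ _ ?_
  all_goals push_cast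
  all_goals ring

lemma polar (z : ℂ) : z = Complex.exp ((z.arg : ℂ) * Complex.I) * (‖z‖ : ℂ) := by
  rw [mul_comm]; exact (Complex.norm_mul_exp_arg_mul_I z).symm

lemma conj_exp_real (t : ℝ) :
    (starRingEnd ℂ) (Complex.exp ((t : ℂ) * Complex.I)) =
      Complex.exp (((-t : ℝ) : ℂ) * Complex.I) := by
  rw [← Complex.exp_conj]
  congr 1
  simp [Complex.conj_ofReal]

lemma single_decomp (W : Matrix (Fin 2) (Fin 2) ℂ) (hWu : W * Wᴴ = 1) (hWdet : W.det = 1) :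
    ∃ β γ δ : ℝ,
      W = Rz β * (Sgate * Hgate) * Rz γ * (Hgate * Sgateᴴ) * Rz δ := by
  have hW' : Wᴴ * W = 1 := mul_eq_one_comm.mp hWu
  set a := W 0 0 with ha'
  set b := W 0 1 with hb'
  set c := W 1 0 with hc'
  set d := W 1 1 with hd'
  have entries1 := Matrix.ext_iff.2 hWu
  have entries2 := Matrix.ext_iff.2 hW'
  have E1 : a * (starRingEnd ℂ) a + b * (starRingEnd ℂ) b = 1 := by
    have := entries1 0 0
    simpa [Matrix.mul_apply, Fin.sum_univ_two, Matrix.conjTranspose_apply, Matrix.one_apply]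
      using this
  have E2 : (starRingEnd ℂ) a * a + (starRingEnd ℂ) c * c = 1 := by
    have := entries2 0 0
    simpa [Matrix.mul_apply, Fin.sum_univ_two, Matrix.conjTranspose_apply, Matrix.one_apply]
      using this
  have E3 : (starRingEnd ℂ) b * b + (starRingEnd ℂ) d * d = 1 := by
    have := entries2 1 1
    simpa [Matrix.mul_apply, Fin.sum_univ_two, Matrix.conjTranspose_apply, Matrix.one_apply]
      using this
  have E4 : (starRingEnd ℂ) a * b + (starRingEnd ℂ) c * d = 0 := by
    have := entries2 0 1
    simpa [Matrix.mul_apply, Fin.sum_univ_two, Matrix.conjTranspose_apply, Matrix.one_apply]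
      using this
  have E4' : (starRingEnd ℂ) b * a + (starRingEnd ℂ) d * c = 0 := by
    have := entries2 1 0
    simpa [Matrix.mul_apply, Fin.sum_univ_two, Matrix.conjTranspose_apply, Matrix.one_apply]
      using this
  have E5 : a * d - b * c = 1 := by
    have := hWdet
    rwa [Matrix.det_fin_two] at this
  have hd : d = (starRingEnd ℂ) a := by
    linear_combination (starRingEnd ℂ) a * E5 - d * E2 + c * E4
  have hc : c = -(starRingEnd ℂ) b := by
    linear_combination -(starRingEnd ℂ) b * E5 + d * E4' - c * E3
  have hsum : Complex.normSq a + Complex.normSq b = 1 := by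
    have := E1
    rw [Complex.mul_conj, Complex.mul_conj] at this
    exact_mod_cast this
  have ha1 : ‖a‖ ≤ 1 := by
    nlinarith [Complex.sq_norm a, Complex.normSq_nonneg b, norm_nonneg a]
  set γ : ℝ := 2 * Real.arccos (‖a‖) with hγ
  have hγ2 : γ / 2 = Real.arccos (‖a‖) := by rw [hγ]; ring
  have hcos : Real.cos (γ / 2) = ‖a‖ := by
    rw [hγ2]
    exact Real.cos_arccos (by linarith [norm_nonneg a]) ha1
  have hsin : Real.sin (γ / 2) = ‖b‖ := by
    rw [hγ2, Real.sin_arccos,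
      show 1 - ‖a‖ ^ 2 = ‖b‖ ^ 2 by
        rw [Complex.sq_norm, Complex.sq_norm]; linarith]
    exact Real.sqrt_sq (norm_nonneg b)
  set φ : ℝ := a.arg with hφ
  set ψ : ℝ := (-b).arg with hψ
  refine ⟨-(φ + ψ), γ, ψ - φ, ?_⟩
  rw [euler]
  have hxa : a = Complex.exp ((φ : ℂ) * Complex.I) * (Real.cos (γ / 2) : ℂ) := by
    rw [hcos]; exact polar a
  have hxb : b = -(Complex.exp ((ψ : ℂ) * Complex.I) * (Real.sin (γ / 2) : ℂ)) := by
    rw [hsin]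
    have := polar (-b)
    rw [show ‖-b‖ = ‖b‖ from by simp] at this
    linear_combination -this
  have hxc : c = Complex.exp (((-ψ : ℝ) : ℂ) * Complex.I) * (Real.sin (γ / 2) : ℂ) := by
    rw [hc, hxb]
    rw [_root_.map_neg, _root_.map_mul, conj_exp_real, Complex.conj_ofReal, neg_neg]
  have hxd : d = Complex.exp (((-φ : ℝ) : ℂ) * Complex.I) * (Real.cos (γ / 2) : ℂ) := by
    rw [hd, hxa]
    rw [_root_.map_mul, conj_exp_real, Complex.conj_ofReal]
  rw [Matrix.eta_fin_two W, ← ha', ← hb', ← hc', ← hd', hxa, hxb, hxc, hxd]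
  congr 2 <;> push_cast <;> ring

lemma single_unitary (V : Matrix (Fin 2) (Fin 2) ℂ) (hV : V * Vᴴ = 1) :
    ∃ α β γ δ : ℝ, V = Complex.exp ((α : ℂ) * Complex.I) •
      (Rz β * (Sgate * Hgate) * Rz γ * (Hgate * Sgateᴴ) * Rz δ) := by
  have hdet1 : V.det * (starRingEnd ℂ) V.det = 1 := by
    have := congrArg Matrix.det hV
    rwa [Matrix.det_mul, Matrix.det_conjTranspose, Matrix.det_one, Complex.star_def] at this
  have habs : ‖V.det‖ = 1 := by
    have h1 : Complex.normSq V.det = 1 := by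
      have := hdet1
      rw [Complex.mul_conj] at this
      exact_mod_cast this
    rw [Complex.norm_def, h1, Real.sqrt_one]
  set α : ℝ := V.det.arg / 2 with hα
  set e : ℂ := Complex.exp ((α : ℂ) * Complex.I) with he
  have hee : e * e = V.det := by
    rw [he, ← Complex.exp_add,
      show (α : ℂ) * Complex.I + (α : ℂ) * Complex.I = (V.det.arg : ℂ) * Complex.I by
        rw [hα]; push_cast; ring]
    conv_rhs => rw [← Complex.norm_mul_exp_arg_mul_I V.det]
    rw [habs]
    simp
  have hce : (starRingEnd ℂ) e * e = 1 := by
    rw [he, conj_exp_real, ← Complex.exp_add,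
      show ((-α : ℝ) : ℂ) * Complex.I + (α : ℂ) * Complex.I = 0 by push_cast; ring,
      Complex.exp_zero]
  set W : Matrix (Fin 2) (Fin 2) ℂ := (starRingEnd ℂ) e • V with hW
  have hVW : V = e • W := by
    rw [hW, smul_smul, mul_comm, hce, one_smul]
  have hWu : W * Wᴴ = 1 := by
    rw [hW, Matrix.conjTranspose_smul, Matrix.smul_mul, Matrix.mul_smul, smul_smul, hV]
    rw [show star ((starRingEnd ℂ) e) = e from Complex.conj_conj e]
    rw [hce, one_smul]
  have hWdet : W.det = 1 := by
    rw [hW, Matrix.det_smul, ← hee]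
    rw [show Fintype.card (Fin 2) = 2 from rfl]
    linear_combination ((starRingEnd ℂ) e * e + 1) * hce
  obtain ⟨β, γ, δ, h⟩ := single_decomp W hWu hWdet
  exact ⟨α, β, γ, δ, by rw [hVW, h]⟩

lemma blockDiag2_mul {N : ℕ} (M M' : Fin N → Matrix (Fin 2) (Fin 2) ℂ) :
    blockDiag2 M * blockDiag2 M' = blockDiag2 (fun k => M k * M' k) := by
  ext ⟨i, a⟩ ⟨j, b⟩
  simp only [blockDiag2, Matrix.mul_apply, Matrix.of_apply, Fintype.sum_prod_type]
  by_cases h : i = j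
  · subst h
    simp [Finset.sum_ite_eq, Matrix.mul_apply]
  · simp [Finset.sum_ite_eq, h]

lemma diag_kron {N : ℕ} (d : Fin N → ℂ) (A : Matrix (Fin 2) (Fin 2) ℂ) :
    (Matrix.diagonal d) ⊗ₖ A = blockDiag2 (fun k => d k • A) := by
  ext ⟨i, a⟩ ⟨j, b⟩
  simp [blockDiag2, Matrix.diagonal, ite_mul, Matrix.kroneckerMap_apply]

lemma one_kron {N : ℕ} (A : Matrix (Fin 2) (Fin 2) ℂ) :
    (1 : Matrix (Fin N) (Fin N) ℂ) ⊗ₖ A = blockDiag2 (fun _ => A) := by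
  rw [← Matrix.diagonal_one, diag_kron]
  simp

theorem blockDiag_unitary_decomposition (n : ℕ) (hn : 1 ≤ n)
    (U : Fin (2 ^ (n - 1)) → Matrix (Fin 2) (Fin 2) ℂ)
    (hU : ∀ k, U k * (U k)ᴴ = 1) :
    ∃ α β γ δ : Fin (2 ^ (n - 1)) → ℝ,
      blockDiag2 U =
        ((Matrix.diagonal fun k => Complex.exp ((α k : ℂ) * Complex.I)) ⊗ₖ
            (1 : Matrix (Fin 2) (Fin 2) ℂ)) *
          blockDiag2 (fun k => Rz (β k)) *
          ((1 : Matrix (Fin (2 ^ (n - 1))) (Fin (2 ^ (n - 1))) ℂ) ⊗ₖ (Sgate * Hgate)) *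
          blockDiag2 (fun k => Rz (γ k)) *
          ((1 : Matrix (Fin (2 ^ (n - 1))) (Fin (2 ^ (n - 1))) ℂ) ⊗ₖ (Hgate * Sgateᴴ)) *
          blockDiag2 (fun k => Rz (δ k)) := by
  choose α β γ δ h using fun k => single_unitary (U k) (hU k)
  refine ⟨α, β, γ, δ, ?_⟩
  rw [diag_kron, one_kron, one_kron, blockDiag2_mul, blockDiag2_mul, blockDiag2_mul,
    blockDiag2_mul, blockDiag2_mul]
  apply congrArg blockDiag2
  funext k
  rw [h k]
  simp only [Matrix.smul_mul, Matrix.one_mul, smul_mul_assoc, one_mul]
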